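/- Let C be an N×M matrix and D an M×N matrix with integer entries, and set A = CD (an N×N matrix) and B = DC (an M×M matrix). Then left multiplication by the transposed matrix Cᵀ : ℤ^N → ℤ^M maps the subgroup (I−Aᵀ)ℤ^N into (I−Bᵀ)ℤ^M, and the induced group homomorphism Φ_{Cᵀ} : ℤ^N/(I−Aᵀ)ℤ^N → ℤ^M/(I−Bᵀ)ℤ^M is an isomorphism of abelian groups whose inverse is the homomorphism Φ_{Dᵀ} induced by left multiplication by Dᵀ. -/

import Mathlib

open Matrix

section Aux

variable {N M : ℕ} (P : Matrix (Fin N) (Fin M) ℤ) (Q : Matrix (Fin M) (Fin N) ℤ)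

lemma aux_key : Pᵀ * (1 - (P * Q)ᵀ) = (1 - (Q * P)ᵀ) * Pᵀ := by
  simp [Matrix.mul_sub, Matrix.sub_mul, Matrix.transpose_mul, Matrix.mul_assoc]

lemma aux_mem (v : Fin N → ℤ)
    (hv : v ∈ AddMonoidHom.range (1 - (P * Q)ᵀ).mulVecLin.toAddMonoidHom) :
    Pᵀ.mulVec v ∈ AddMonoidHom.range (1 - (Q * P)ᵀ).mulVecLin.toAddMonoidHom := by
  obtain ⟨u, rfl⟩ := hv
  exact ⟨Pᵀ.mulVec u, by
    simp only [LinearMap.toAddMonoidHom_coe, Matrix.mulVecLin_apply,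
      Matrix.mulVec_mulVec, aux_key]⟩

lemma aux_mk (v : Fin N → ℤ) :
    (QuotientAddGroup.mk ((P * Q)ᵀ.mulVec v) :
      (Fin N → ℤ) ⧸ AddMonoidHom.range (1 - (P * Q)ᵀ).mulVecLin.toAddMonoidHom) =
    QuotientAddGroup.mk v := by
  rw [QuotientAddGroup.eq]
  refine ⟨v, ?_⟩
  simp [Matrix.sub_mulVec, neg_add_eq_sub]
  rw [← Matrix.transpose_mul, Matrix.mulVec_transpose]

end Aux

theorem stmt_0 (N M : ℕ) (C : Matrix (Fin N) (Fin M) ℤ) (D : Matrix (Fin M) (Fin N) ℤ)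
    (A : Matrix (Fin N) (Fin N) ℤ) (B : Matrix (Fin M) (Fin M) ℤ)
    (hA : A = C * D) (hB : B = D * C) :
    (∀ v ∈ AddMonoidHom.range (1 - Aᵀ).mulVecLin.toAddMonoidHom,
        Cᵀ.mulVec v ∈ AddMonoidHom.range (1 - Bᵀ).mulVecLin.toAddMonoidHom) ∧
    ∃ Φ : ((Fin N → ℤ) ⧸ AddMonoidHom.range (1 - Aᵀ).mulVecLin.toAddMonoidHom) ≃+
          ((Fin M → ℤ) ⧸ AddMonoidHom.range (1 - Bᵀ).mulVecLin.toAddMonoidHom),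
      (∀ v : Fin N → ℤ, Φ (QuotientAddGroup.mk v) = QuotientAddGroup.mk (Cᵀ.mulVec v)) ∧
      (∀ w : Fin M → ℤ, Φ.symm (QuotientAddGroup.mk w) = QuotientAddGroup.mk (Dᵀ.mulVec w)) := by
  subst hA hB
  refine ⟨aux_mem C D, ?_⟩
  have h1 : AddMonoidHom.range (1 - (C * D)ᵀ).mulVecLin.toAddMonoidHom ≤
      (AddMonoidHom.range (1 - (D * C)ᵀ).mulVecLin.toAddMonoidHom).comap
        Cᵀ.mulVecLin.toAddMonoidHom := fun v hv => aux_mem C D v hv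
  have h2 : AddMonoidHom.range (1 - (D * C)ᵀ).mulVecLin.toAddMonoidHom ≤
      (AddMonoidHom.range (1 - (C * D)ᵀ).mulVecLin.toAddMonoidHom).comap
        Dᵀ.mulVecLin.toAddMonoidHom := fun v hv => aux_mem D C v hv
  let f := QuotientAddGroup.map _ _ Cᵀ.mulVecLin.toAddMonoidHom h1
  let g := QuotientAddGroup.map _ _ Dᵀ.mulVecLin.toAddMonoidHom h2
  have hf : ∀ v : Fin N → ℤ, f (QuotientAddGroup.mk v) = QuotientAddGroup.mk (Cᵀ.mulVec v) :=
    fun v => rfl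
  have hg : ∀ w : Fin M → ℤ, g (QuotientAddGroup.mk w) = QuotientAddGroup.mk (Dᵀ.mulVec w) :=
    fun w => rfl
  refine ⟨{ toFun := f, invFun := g, left_inv := ?_, right_inv := ?_,
            map_add' := f.map_add }, hf, ?_⟩
  · intro x
    induction x using QuotientAddGroup.induction_on with
    | H v =>
      rw [hf, hg, Matrix.mulVec_mulVec, ← Matrix.transpose_mul, aux_mk]
  · intro x
    induction x using QuotientAddGroup.induction_on with
    | H w =>
      rw [hg, hf, Matrix.mulVec_mulVec, ← Matrix.transpose_mul, aux_mk]
  · intro w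
    exact hg w
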